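/- arXiv:math/0010095 — 2 statements merged into one kernel-verified Lean document; each statement's English description precedes it below -/
import Mathlib

section
/- Define w^m₂₂ = 3T₁/2 - r, w^m₂₄ = T₁/2 + (2T₁ + r)/(2(n+2)), and r_c = ((2n+2)/(2n+5))T₁. For T₁ > 0, integer n ≥ 1, and 0 ≤ r < T₁: if r < r_c then w^m₂₄ < w^m₂₂, and if r > r_c then w^m₂₂ < w^m₂₄. -/
/-- Comparison of w^m₂₂ and w^m₂₄ relative to r_c. -/
theorem w22_w24_compare (T₁ r : ℝ) (n : ℕ) (hT : 0 < T₁) (hn : 1 ≤ n)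
    (hr0 : 0 ≤ r) (hr : r < T₁) :
    (r < ((2 * n + 2) / (2 * n + 5)) * T₁ →
      T₁ / 2 + (2 * T₁ + r) / (2 * (n + 2)) < 3 * T₁ / 2 - r) ∧
    (((2 * n + 2) / (2 * n + 5)) * T₁ < r →
      3 * T₁ / 2 - r < T₁ / 2 + (2 * T₁ + r) / (2 * (n + 2))) := by
  have hn2 : (0:ℝ) < 2 * (n:ℝ) + 5 := by positivity
  have hd : (0:ℝ) < 2 * ((n:ℝ) + 2) := by positivity
  constructor <;> intro h
  · rw [div_mul_eq_mul_div, lt_div_iff₀ hn2] at h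
    have h2 : (2 * T₁ + r) / (2 * (n + 2)) < T₁ - r := by
      rw [div_lt_iff₀ hd]; nlinarith
    linarith
  · rw [div_mul_eq_mul_div, div_lt_iff₀ hn2] at h
    have h2 : T₁ - r < (2 * T₁ + r) / (2 * (n + 2)) := by
      rw [lt_div_iff₀ hd]; nlinarith
    linarith
end

section
/- Suppose r < r_s where r_s = ((2n+2)/(2n+3))T₁, and let n₁, n₂, n₃ ≥ 0 with n₂ > (r / ((2n+3)(r_s - r))) (3n₁ + n₃). Then n₁·w^m₁₁ + n₂·w^m₂₁ + n₃·w^m₃₁ < n₁·w^m₁₂ + n₂·w^m₂₂ + n₃·w^m₃₂, where w^m₁₁ = T₁/2 + 3r/(2(n+1)), w^m₂₁ = w^m₃₁ = T₁/2 + r/(2(n+1)), w^m₁₂ = w^m₃₂ = T₁/2, and w^m₂₂ = 3T₁/2 - r. -/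
/-- If enough passengers take journey J₂, rule S₁ beats rule S₂ on average waiting time. -/
theorem S1_beats_S2 (T₁ r : ℝ) (n : ℕ) (hT : 0 < T₁) (hn : 1 ≤ n)
    (hr0 : 0 ≤ r) (hr : r < T₁)
    (hrs : r < ((2 * n + 2) / (2 * n + 3)) * T₁)
    (n₁ n₂ n₃ : ℝ) (h₁ : 0 ≤ n₁) (h₂ : 0 ≤ n₂) (h₃ : 0 ≤ n₃)
    (hcond : n₂ > (r / ((2 * n + 3) * (((2 * n + 2) / (2 * n + 3)) * T₁ - r))) * (3 * n₁ + n₃)) :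
    n₁ * (T₁ / 2 + 3 * r / (2 * (n + 1))) + n₂ * (T₁ / 2 + r / (2 * (n + 1))) +
      n₃ * (T₁ / 2 + r / (2 * (n + 1))) <
    n₁ * (T₁ / 2) + n₂ * (3 * T₁ / 2 - r) + n₃ * (T₁ / 2) := by
  set N : ℝ := (n : ℝ) with hN
  have hN1 : (1 : ℝ) ≤ N := by simpa [hN] using (Nat.one_le_cast (α := ℝ)).mpr hn
  have h23 : (0 : ℝ) < 2 * N + 3 := by linarith
  have hD : (0 : ℝ) < (2 * N + 3) * (((2 * N + 2) / (2 * N + 3)) * T₁ - r) := by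
    have : 0 < ((2 * N + 2) / (2 * N + 3)) * T₁ - r := by linarith
    positivity
  have key : r * (3 * n₁ + n₃) < n₂ * ((2 * N + 3) * (((2 * N + 2) / (2 * N + 3)) * T₁ - r)) := by
    rw [gt_iff_lt, div_mul_eq_mul_div, div_lt_iff₀ hD] at hcond
    linarith
  have hexp : (2 * N + 3) * (((2 * N + 2) / (2 * N + 3)) * T₁ - r)
      = (2 * N + 2) * T₁ - (2 * N + 3) * r := by
    field_simp
  rw [hexp] at key
  have hNpos : (0 : ℝ) < 2 * (N + 1) := by linarith
  have hmain : (3 * n₁ * r + n₂ * r + n₃ * r) / (2 * (N + 1)) < n₂ * (T₁ - r) := by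
    rw [div_lt_iff₀ hNpos]
    nlinarith [key]
  have heq : n₁ * (T₁ / 2 + 3 * r / (2 * (N + 1))) + n₂ * (T₁ / 2 + r / (2 * (N + 1))) +
      n₃ * (T₁ / 2 + r / (2 * (N + 1)))
      = (n₁ + n₂ + n₃) * (T₁ / 2) + (3 * n₁ * r + n₂ * r + n₃ * r) / (2 * (N + 1)) := by
    field_simp
    ring
  rw [heq]
  linarith
end
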